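/- If 0 < p < 1/2 and 0 ≤ e ≤ 2p, then D(x) = H(x*p) - (1-e)·H(x) - H(p) is monotonically decreasing on the interval [0, 1/2]. -/

import Mathlib

open Real Set

/-- Binary entropy function (base 2). -/
noncomputable def binH (t : ℝ) : ℝ := -(t * Real.logb 2 t) - (1 - t) * Real.logb 2 (1 - t)

/-- Binary convolution x*p = x(1-p)+p(1-x). -/
def bconv (x p : ℝ) : ℝ := x * (1 - p) + p * (1 - x)

/-- D(x) = H(x*p) - (1-e) H(x) - H(p). -/
noncomputable def Dfun (p e x : ℝ) : ℝ := binH (bconv x p) - (1 - e) * binH x - binH p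

lemma binH_eq : binH = fun t : ℝ =>
    (-(t * Real.log t) - (1 - t) * Real.log (1 - t)) / Real.log 2 := by
  funext t
  simp only [binH, Real.logb]
  ring

lemma continuous_binH : Continuous binH := by
  rw [binH_eq]
  exact ((Real.continuous_mul_log.neg.sub
    (Real.continuous_mul_log.comp (continuous_const.sub continuous_id))).div_const _)

lemma hasDerivAt_binH {t : ℝ} (h0 : 0 < t) (h1 : t < 1) :
    HasDerivAt binH ((Real.log (1 - t) - Real.log t) / Real.log 2) t := by
  have ht : t ≠ 0 := ne_of_gt h0
  have ht1 : (1 : ℝ) - t ≠ 0 := by intro h; linarith [h]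
  have A : HasDerivAt (fun x : ℝ => x * Real.log x) (Real.log t + 1) t :=
    Real.hasDerivAt_mul_log ht
  have B : HasDerivAt (fun x : ℝ => (1 - x) * Real.log (1 - x))
      (-(Real.log (1 - t) + 1)) t := by
    have h := (Real.hasDerivAt_mul_log ht1).comp t
      ((hasDerivAt_const t (1 : ℝ)).sub (hasDerivAt_id t))
    refine h.congr_deriv ?_
    ring
  rw [binH_eq]
  have := (A.neg.sub B).div_const (Real.log 2)
  refine this.congr_deriv ?_
  ring

lemma hasDerivAt_bconv (p x : ℝ) : HasDerivAt (fun x => bconv x p) (1 - 2 * p) x := by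
  have h : HasDerivAt (fun x : ℝ => x * (1 - p) + p * (1 - x))
      (1 * (1 - p) + (0 * (1 - x) + p * (0 - 1))) x :=
    ((hasDerivAt_id x).mul_const _).add
      ((hasDerivAt_const x p).mul ((hasDerivAt_const x (1:ℝ)).sub (hasDerivAt_id x)))
  refine h.congr_deriv ?_
  ring

lemma hasDerivAt_Dfun {p e x : ℝ} (hp0 : 0 < p) (hp1 : p < 1 / 2)
    (hx0 : 0 < x) (hx1 : x < 1 / 2) :
    HasDerivAt (fun x => Dfun p e x)
      (((1 - 2 * p) * (Real.log (1 - bconv x p) - Real.log (bconv x p))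
        - (1 - e) * (Real.log (1 - x) - Real.log x)) / Real.log 2) x := by
  have hy0 : 0 < bconv x p := by unfold bconv; nlinarith
  have hy1 : bconv x p < 1 := by unfold bconv; nlinarith
  have h1 : HasDerivAt (fun x => binH (bconv x p))
      ((Real.log (1 - bconv x p) - Real.log (bconv x p)) / Real.log 2 * (1 - 2 * p)) x :=
    ((hasDerivAt_binH hy0 hy1).comp x (hasDerivAt_bconv p x) :)
  have h2 : HasDerivAt binH ((Real.log (1 - x) - Real.log x) / Real.log 2) x :=
    hasDerivAt_binH hx0 (by linarith)
  have h := (h1.sub ((h2.const_mul (1 - e)))).sub_const (binH p)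
  refine h.congr_deriv ?_
  ring

/-- When e ≤ 2p, D is monotonically decreasing on [0,1/2]. -/
theorem stmt2 (p e : ℝ) (hp0 : 0 < p) (hp1 : p < 1 / 2) (he0 : 0 ≤ e) (he1 : e ≤ 2 * p) :
    AntitoneOn (fun x => Dfun p e x) (Set.Icc (0 : ℝ) (1 / 2)) := by
  have hlog2 : 0 < Real.log 2 := Real.log_pos (by norm_num)
  apply antitoneOn_of_deriv_nonpos (convex_Icc _ _)
  · apply Continuous.continuousOn
    unfold Dfun
    exact ((continuous_binH.comp (by continuity : Continuous fun x => bconv x p)).sub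
      (continuous_const.mul continuous_binH)).sub continuous_const
  · rw [interior_Icc]
    intro x hx
    exact (hasDerivAt_Dfun hp0 hp1 hx.1 hx.2).differentiableAt.differentiableWithinAt
  · rw [interior_Icc]
    intro x hx
    obtain ⟨hx0, hx1⟩ := hx
    rw [(hasDerivAt_Dfun hp0 hp1 hx0 hx1).deriv]
    set y := bconv x p with hy
    have hy0 : 0 < y := by rw [hy]; unfold bconv; nlinarith
    have hyx : x ≤ y := by rw [hy]; unfold bconv; nlinarith
    have hy2 : y ≤ 1 / 2 := by rw [hy]; unfold bconv; nlinarith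
    have hA0 : 0 ≤ Real.log (1 - y) - Real.log y := by
      have := Real.log_le_log hy0 (by linarith : y ≤ 1 - y)
      linarith
    have hAB : Real.log (1 - y) - Real.log y ≤ Real.log (1 - x) - Real.log x := by
      have h1 := Real.log_le_log (by linarith : (0:ℝ) < 1 - y) (by linarith : 1 - y ≤ 1 - x)
      have h2 := Real.log_le_log hx0 hyx
      linarith
    have hmul : (1 - 2 * p) * (Real.log (1 - y) - Real.log y) ≤
        (1 - e) * (Real.log (1 - x) - Real.log x) :=
      mul_le_mul (by linarith) hAB hA0 (by linarith)
    exact div_nonpos_of_nonpos_of_nonneg (by linarith) hlog2.le
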